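/- Let U ⊆ ℝˡ be an open convex set and let C : U → Mₙ(ℝ) be continuously differentiable such that for every φ ∈ U, C(φ) is symmetric with eigenvalues bounded below by λ_min > 0, and such that ‖∂C/∂φⱼ(φ)‖_F ≤ M for all φ ∈ U and all j = 1, …, l. Then for all φ, φ' ∈ U: |log det C(φ) − log det C(φ')| ≤ (√n / λ_min) · M · √l · ‖φ − φ'‖₂. -/

import Mathlib

open Matrix

/-- The Euclidean norm `‖x‖₂ = √(Σᵢ xᵢ²)` of a vector `x ∈ ℝˡ`. -/
noncomputable def vnorm {l : ℕ} (x : Fin l → ℝ) : ℝ :=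
  Real.sqrt (∑ i, (x i) ^ 2)

/-- The Frobenius norm `‖A‖_F = √(tr(Aᵀ A))` of a real `n × n` matrix. -/
noncomputable def frobNorm {n : ℕ} (A : Matrix (Fin n) (Fin n) ℝ) : ℝ :=
  Real.sqrt (Matrix.trace (Aᵀ * A))

/-- The entrywise partial derivative `∂C/∂φⱼ` of a matrix-valued map
`C : ℝˡ → Mₙ(ℝ)` in the `j`-th coordinate, at the point `φ`. -/
noncomputable def partialDeriv {l n : ℕ}
    (C : (Fin l → ℝ) → Matrix (Fin n) (Fin n) ℝ) (j : Fin l) (φ : Fin l → ℝ) :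
    Matrix (Fin n) (Fin n) ℝ :=
  Matrix.of fun i k => fderiv ℝ (fun ψ => C ψ i k) φ (Pi.single j 1)

set_option maxHeartbeats 1000000


/-- Discrete Cauchy–Schwarz with square roots. -/
private lemma cs_abs {ι : Type*} [Fintype ι] (f g : ι → ℝ) :
    |∑ i, f i * g i| ≤ Real.sqrt (∑ i, f i ^ 2) * Real.sqrt (∑ i, g i ^ 2) := by
  have h := Finset.sum_mul_sq_le_sq_mul_sq Finset.univ f g
  calc |∑ i, f i * g i| = Real.sqrt ((∑ i, f i * g i) ^ 2) := (Real.sqrt_sq_eq_abs _).symm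
    _ ≤ Real.sqrt ((∑ i, f i ^ 2) * ∑ i, g i ^ 2) := Real.sqrt_le_sqrt h
    _ = _ := Real.sqrt_mul (by positivity) _

/-- The determinant as a continuous multilinear map in the rows. -/
noncomputable def detCML (n : ℕ) :
    ContinuousMultilinearMap ℝ (fun _ : Fin n => (Fin n → ℝ)) ℝ :=
  MultilinearMap.mkContinuous
    (Matrix.detRowAlternating : (Fin n → ℝ) [⋀^Fin n]→ₗ[ℝ] ℝ).toMultilinearMap
    (Nat.factorial n) (fun m => by
      have hdet : (Matrix.detRowAlternating (R := ℝ) (n := Fin n)).toMultilinearMap m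
          = (Matrix.of m).det := rfl
      rw [hdet, Matrix.det_apply']
      calc ‖∑ σ : Equiv.Perm (Fin n), Equiv.Perm.sign σ * ∏ i, Matrix.of m (σ i) i‖
          ≤ ∑ σ : Equiv.Perm (Fin n), ‖(Equiv.Perm.sign σ : ℝ) * ∏ i, Matrix.of m (σ i) i‖ :=
            norm_sum_le _ _
        _ ≤ ∑ _σ : Equiv.Perm (Fin n), ∏ i, ‖m i‖ := by
            apply Finset.sum_le_sum
            intro σ _
            rw [norm_mul]
            have h1 : ‖((Equiv.Perm.sign σ : ℤ) : ℝ)‖ = 1 := by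
              rcases Int.units_eq_one_or (Equiv.Perm.sign σ) with h | h <;> simp [h]
            rw [h1, one_mul]
            calc ‖∏ i, Matrix.of m (σ i) i‖ = ∏ i, |Matrix.of m (σ i) i| := by
                  rw [Real.norm_eq_abs, Finset.abs_prod]
              _ ≤ ∏ i, ‖m (σ i)‖ := by
                  apply Finset.prod_le_prod (fun i _ => abs_nonneg _)
                  exact fun i _ => norm_le_pi_norm (m (σ i)) i
              _ = ∏ i, ‖m i‖ := Equiv.prod_comp σ (fun i => ‖m i‖)
        _ = (Nat.factorial n : ℝ) * ∏ i, ‖m i‖ := by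
            rw [Finset.sum_const, Finset.card_univ, Fintype.card_perm, nsmul_eq_mul, Fintype.card_fin])

lemma detCML_apply {n : ℕ} (A : Matrix (Fin n) (Fin n) ℝ) :
    detCML n (fun i => A i) = A.det := rfl

/-- `∑ i, det (updateRow A i (H i)) = trace (adjugate A * H)`. -/
lemma sum_det_updateRow {n : ℕ} (A H : Matrix (Fin n) (Fin n) ℝ) :
    ∑ i, (A.updateRow i (H i)).det = (Matrix.adjugate A * H).trace := by
  have hrow : ∀ i, (A.updateRow i (H i)).det
      = ∑ j, H i j * (Matrix.adjugate A) j i := by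
    intro i
    have hHi : H i = ∑ j, H i j • (Pi.single j 1 : Fin n → ℝ) := by
      funext k
      simp [Pi.single_apply, Finset.sum_apply]
    calc (A.updateRow i (H i)).det
        = Matrix.detRowAlternating (Function.update A i (∑ j, H i j • (Pi.single j 1 : Fin n → ℝ))) := by
          rw [← hHi]; rfl
      _ = ∑ j, H i j * (Matrix.adjugate A) j i := by
          erw [AlternatingMap.map_update_sum]
          apply Finset.sum_congr rfl
          intro j _
          erw [AlternatingMap.map_update_smul]
          rw [Matrix.adjugate_apply]
          rfl
  rw [Matrix.trace]
  simp only [hrow, Matrix.diag, Matrix.mul_apply]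
  rw [Finset.sum_comm]
  apply Finset.sum_congr rfl
  intro i _
  apply Finset.sum_congr rfl
  intro j _
  ring

/-- Derivative of `det` along a one-parameter family. -/
lemma hasDerivAt_detCurve {n : ℕ} (A : ℝ → Matrix (Fin n) (Fin n) ℝ)
    (A' : Matrix (Fin n) (Fin n) ℝ) (t : ℝ)
    (h : ∀ i k, HasDerivAt (fun s => A s i k) (A' i k) t) :
    HasDerivAt (fun s => (A s).det) ((Matrix.adjugate (A t) * A').trace) t := by
  have h1 : HasDerivAt (fun s => (fun i => A s i : Fin n → Fin n → ℝ))
      (fun i => A' i) t :=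
    hasDerivAt_pi.2 fun i => hasDerivAt_pi.2 fun k => h i k
  have h2 := (detCML n).hasFDerivAt (x := fun i => A t i)
  have h3 := h2.comp_hasDerivAt t h1
  have heq : (detCML n).linearDeriv (fun i => A t i) (fun i => A' i)
      = (Matrix.adjugate (A t) * A').trace := by
    rw [ContinuousMultilinearMap.linearDeriv_apply, ← sum_det_updateRow]
    apply Finset.sum_congr rfl
    intro i _
    rfl
  rw [heq] at h3
  exact h3

lemma frobNorm_nonneg {n : ℕ} (A : Matrix (Fin n) (Fin n) ℝ) : 0 ≤ frobNorm A :=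
  Real.sqrt_nonneg _

lemma trace_transpose_mul {n : ℕ} (A : Matrix (Fin n) (Fin n) ℝ) :
    (Aᵀ * A).trace = ∑ p : Fin n × Fin n, A p.1 p.2 ^ 2 := by
  rw [Matrix.trace, Fintype.sum_prod_type]
  simp only [Matrix.diag, Matrix.mul_apply, Matrix.transpose_apply]
  rw [Finset.sum_comm]
  apply Finset.sum_congr rfl
  intro i _
  apply Finset.sum_congr rfl
  intro j _
  ring

/-- Frobenius Cauchy–Schwarz: `|tr(B·H)| ≤ ‖B‖_F ‖H‖_F`. -/
lemma abs_trace_mul_le {n : ℕ} (B H : Matrix (Fin n) (Fin n) ℝ) :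
    |(B * H).trace| ≤ frobNorm B * frobNorm H := by
  have h1 : (B * H).trace = ∑ p : Fin n × Fin n, B p.1 p.2 * H p.2 p.1 := by
    rw [Matrix.trace, Fintype.sum_prod_type]
    simp only [Matrix.diag, Matrix.mul_apply]
  rw [h1, frobNorm, frobNorm, trace_transpose_mul, trace_transpose_mul]
  have := cs_abs (fun p : Fin n × Fin n => B p.1 p.2) (fun p : Fin n × Fin n => H p.2 p.1)
  refine this.trans ?_
  apply mul_le_mul_of_nonneg_left _ (Real.sqrt_nonneg _)
  apply Real.sqrt_le_sqrt
  rw [← Equiv.sum_comp (Equiv.prodComm (Fin n) (Fin n)) (fun p : Fin n × Fin n => H p.1 p.2 ^ 2)]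
  simp

/-- Frobenius bound on the inverse of a well-conditioned symmetric matrix. -/
lemma frob_inv_bound {n : ℕ} (A : Matrix (Fin n) (Fin n) ℝ) (lmin : ℝ) (hl : 0 < lmin)
    (hsymm : A.IsSymm) (hpsd : (A - lmin • (1 : Matrix (Fin n) (Fin n) ℝ)).PosSemidef) :
    frobNorm A⁻¹ ≤ Real.sqrt n / lmin := by
  have key : ∀ x : Fin n → ℝ, lmin * (x ⬝ᵥ x) ≤ x ⬝ᵥ (A *ᵥ x) := by
    intro x
    have h := (Matrix.posSemidef_iff_dotProduct_mulVec.1 hpsd).2 x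
    rw [star_trivial, Matrix.sub_mulVec, dotProduct_sub, Matrix.smul_mulVec,
      Matrix.one_mulVec, dotProduct_smul, smul_eq_mul] at h
    linarith
  have hposdef : A.PosDef := by
    refine Matrix.posDef_iff_dotProduct_mulVec.2 ⟨?_, fun x hx => ?_⟩
    · ext i j
      simp only [Matrix.conjTranspose_apply, star_trivial]
      exact congrFun (congrFun hsymm j) i ▸ rfl
    · have h0 : 0 < x ⬝ᵥ x := by
        have h1 : x ⬝ᵥ x ≠ 0 := fun h => hx (dotProduct_self_eq_zero.mp h)
        have h2 : 0 ≤ x ⬝ᵥ x := Finset.sum_nonneg fun i _ => mul_self_nonneg _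
        exact lt_of_le_of_ne h2 (Ne.symm h1)
      rw [star_trivial]
      calc (0:ℝ) < lmin * (x ⬝ᵥ x) := by positivity
        _ ≤ x ⬝ᵥ (A *ᵥ x) := key x
  have hdet : IsUnit A.det := hposdef.det_pos.ne'.isUnit
  have hAinv : A * A⁻¹ = 1 := Matrix.mul_nonsing_inv A hdet
  -- ‖A⁻¹ x‖² ≤ ‖x‖²/lmin²
  have colb : ∀ x : Fin n → ℝ, (A⁻¹ *ᵥ x) ⬝ᵥ (A⁻¹ *ᵥ x) ≤ (x ⬝ᵥ x) / lmin ^ 2 := by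
    intro x
    set y := A⁻¹ *ᵥ x with hy
    have hay : A *ᵥ y = x := by
      rw [hy, Matrix.mulVec_mulVec, hAinv, Matrix.one_mulVec]
    set a := Real.sqrt (y ⬝ᵥ y) with ha
    set b := Real.sqrt (x ⬝ᵥ x) with hb
    have hyy : 0 ≤ y ⬝ᵥ y := Finset.sum_nonneg fun i _ => mul_self_nonneg _
    have hxx : 0 ≤ x ⬝ᵥ x := Finset.sum_nonneg fun i _ => mul_self_nonneg _
    have ha2 : a ^ 2 = y ⬝ᵥ y := Real.sq_sqrt hyy
    have hb2 : b ^ 2 = x ⬝ᵥ x := Real.sq_sqrt hxx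
    have hcs : y ⬝ᵥ x ≤ a * b := by
      have := cs_abs y x
      have h2 : y ⬝ᵥ x = ∑ i, y i * x i := rfl
      rw [h2]
      refine (le_abs_self _).trans (this.trans ?_)
      apply le_of_eq
      congr 1 <;> [skip; skip] <;> (apply congrArg; apply Finset.sum_congr rfl; intro i _; ring)
    have hkey : lmin * a ^ 2 ≤ a * b := by
      rw [ha2]
      calc lmin * (y ⬝ᵥ y) ≤ y ⬝ᵥ (A *ᵥ y) := key y
        _ = y ⬝ᵥ x := by rw [hay]
        _ ≤ a * b := hcs
    rw [← ha2, ← hb2]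
    rcases eq_or_lt_of_le (Real.sqrt_nonneg (y ⬝ᵥ y)) with h0 | h0
    · rw [ha, ← h0]
      have hnn : (0:ℝ) ≤ b ^ 2 / lmin ^ 2 := by positivity
      simpa using hnn
    · have hpa : 0 < a := h0
      have h1 : lmin * a ≤ b := by nlinarith
      have h2 : (lmin * a) ^ 2 ≤ b ^ 2 := by nlinarith [mul_nonneg hl.le hpa.le]
      calc a ^ 2 = (lmin * a) ^ 2 / lmin ^ 2 := by field_simp
        _ ≤ b ^ 2 / lmin ^ 2 := by gcongr
  -- sum over columns
  have htr : ((A⁻¹)ᵀ * A⁻¹).trace ≤ n / lmin ^ 2 := by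
    have hcol : ∀ i, ((A⁻¹)ᵀ * A⁻¹) i i
        = (A⁻¹ *ᵥ Pi.single i 1) ⬝ᵥ (A⁻¹ *ᵥ Pi.single i 1) := by
      intro i
      simp only [Matrix.mul_apply, Matrix.transpose_apply, Matrix.mulVec_single_one,
        Matrix.col_apply, dotProduct]
    rw [Matrix.trace]
    calc ∑ i, ((A⁻¹)ᵀ * A⁻¹).diag i
        ≤ ∑ _i : Fin n, (1 : ℝ) / lmin ^ 2 := by
          apply Finset.sum_le_sum
          intro i _
          rw [Matrix.diag, hcol i]
          have := colb (Pi.single i 1)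
          have hsing : (Pi.single i 1 : Fin n → ℝ) ⬝ᵥ Pi.single i 1 = 1 := by
            rw [dotProduct_single]
            simp
          rwa [hsing] at this
      _ = n / lmin ^ 2 := by
          rw [Finset.sum_const, Finset.card_univ, Fintype.card_fin, nsmul_eq_mul]
          ring
  rw [frobNorm]
  calc Real.sqrt (((A⁻¹)ᵀ * A⁻¹).trace) ≤ Real.sqrt ((n : ℝ) / lmin ^ 2) :=
        Real.sqrt_le_sqrt htr
    _ = Real.sqrt n / lmin := by
        rw [Real.sqrt_div (Nat.cast_nonneg n), Real.sqrt_sq hl.le]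

/-- Positive definiteness from the lower eigenvalue bound. -/
lemma posDef_of_shift {n : ℕ} (A : Matrix (Fin n) (Fin n) ℝ) (lmin : ℝ) (hl : 0 < lmin)
    (hsymm : A.IsSymm) (hpsd : (A - lmin • (1 : Matrix (Fin n) (Fin n) ℝ)).PosSemidef) :
    A.PosDef := by
  have key : ∀ x : Fin n → ℝ, lmin * (x ⬝ᵥ x) ≤ x ⬝ᵥ (A *ᵥ x) := by
    intro x
    have h := (Matrix.posSemidef_iff_dotProduct_mulVec.1 hpsd).2 x
    rw [star_trivial, Matrix.sub_mulVec, dotProduct_sub, Matrix.smul_mulVec,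
      Matrix.one_mulVec, dotProduct_smul, smul_eq_mul] at h
    linarith
  refine Matrix.posDef_iff_dotProduct_mulVec.2 ⟨?_, fun x hx => ?_⟩
  · ext i j
    simp only [Matrix.conjTranspose_apply, star_trivial]
    exact congrFun (congrFun hsymm j) i ▸ rfl
  · have h0 : 0 < x ⬝ᵥ x := by
      have h1 : x ⬝ᵥ x ≠ 0 := fun h => hx (dotProduct_self_eq_zero.mp h)
      have h2 : 0 ≤ x ⬝ᵥ x := Finset.sum_nonneg fun i _ => mul_self_nonneg _
      exact lt_of_le_of_ne h2 (Ne.symm h1)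
    rw [star_trivial]
    calc (0:ℝ) < lmin * (x ⬝ᵥ x) := by positivity
      _ ≤ x ⬝ᵥ (A *ᵥ x) := key x


/-- **Lipschitz bound for the log-determinant.**
If `C : U → Mₙ(ℝ)` is continuously differentiable (entrywise) on an open convex
`U ⊆ ℝˡ`, with `C(φ)` symmetric with eigenvalues bounded below by `λ_min > 0`,
and `‖∂C/∂φⱼ(φ)‖_F ≤ M` for all `φ ∈ U` and all `j`, then for all `φ, φ' ∈ U`,
`|log det C(φ) − log det C(φ')| ≤ (√n / λ_min) · M · √l · ‖φ − φ'‖₂`. -/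
theorem logDet_lipschitz {l n : ℕ} (U : Set (Fin l → ℝ))
    (hUopen : IsOpen U) (hUconv : Convex ℝ U)
    (C : (Fin l → ℝ) → Matrix (Fin n) (Fin n) ℝ)
    (hC : ∀ i k, ContDiffOn ℝ 1 (fun φ => C φ i k) U)
    (lmin M : ℝ) (hl : 0 < lmin)
    (hsymm : ∀ φ ∈ U, (C φ).IsSymm)
    (hpsd : ∀ φ ∈ U, (C φ - lmin • (1 : Matrix (Fin n) (Fin n) ℝ)).PosSemidef)
    (hM : ∀ φ ∈ U, ∀ j, frobNorm (partialDeriv C j φ) ≤ M)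
    (φ φ' : Fin l → ℝ) (hφ : φ ∈ U) (hφ' : φ' ∈ U) :
    |Real.log ((C φ).det) - Real.log ((C φ').det)| ≤
      (Real.sqrt n / lmin) * M * Real.sqrt l * vnorm (φ - φ') := by
  rcases Nat.eq_zero_or_pos l with hl0 | hl0
  · subst hl0
    have hφφ : φ = φ' := Subsingleton.elim _ _
    subst hφφ
    simp [vnorm]
  have hM0 : 0 ≤ M := le_trans (frobNorm_nonneg _) (hM φ hφ ⟨0, hl0⟩)
  -- the segment
  set v : Fin l → ℝ := φ - φ' with hv
  have hγmem : ∀ t ∈ Set.Icc (0:ℝ) 1, φ' + t • v ∈ U := by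
    intro t ht
    have h := hUconv hφ' hφ (sub_nonneg.2 ht.2) ht.1 (by ring)
    convert h using 1
    funext i
    simp [hv]
    ring
  -- entrywise derivative along the segment
  have hentry : ∀ t ∈ Set.Icc (0:ℝ) 1, ∀ i k,
      HasDerivAt (fun s => C (φ' + s • v) i k)
        ((fderiv ℝ (fun ψ => C ψ i k) (φ' + t • v)) v) t := by
    intro t ht i k
    have hdiffAt : DifferentiableAt ℝ (fun ψ => C ψ i k) (φ' + t • v) :=
      ((hC i k).differentiableOn one_ne_zero).differentiableAt (hUopen.mem_nhds (hγmem t ht))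
    have hγ : HasDerivAt (fun s : ℝ => φ' + s • v) v t := by
      have h1 : HasDerivAt (fun s : ℝ => s • v) ((1:ℝ) • v) t :=
        (hasDerivAt_id t).smul_const v
      simpa using h1.const_add φ'
    exact hdiffAt.hasFDerivAt.comp_hasDerivAt t hγ
  -- the directional derivative matrix
  set D : ℝ → Matrix (Fin n) (Fin n) ℝ :=
    fun t => Matrix.of fun i k => (fderiv ℝ (fun ψ => C ψ i k) (φ' + t • v)) v with hD
  set G : ℝ → ℝ := fun t => Real.log ((C (φ' + t • v)).det) with hG
  set G' : ℝ → ℝ := fun t => ((C (φ' + t • v))⁻¹ * D t).trace with hG'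
  set K : ℝ := (Real.sqrt n / lmin) * M * Real.sqrt l * vnorm (φ - φ') with hK
  have hposdef : ∀ t ∈ Set.Icc (0:ℝ) 1, (C (φ' + t • v)).PosDef := fun t ht =>
    posDef_of_shift _ lmin hl (hsymm _ (hγmem t ht)) (hpsd _ (hγmem t ht))
  -- derivative of G
  have hGderiv : ∀ t ∈ Set.Icc (0:ℝ) 1, HasDerivAt G (G' t) t := by
    intro t ht
    have hdet := hasDerivAt_detCurve (fun s => C (φ' + s • v)) (D t) t (hentry t ht)
    have hdetne : (C (φ' + t • v)).det ≠ 0 := (hposdef t ht).det_pos.ne'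
    have hlog := hdet.log hdetne
    have heq : G' t = (Matrix.adjugate (C (φ' + t • v)) * D t).trace / (C (φ' + t • v)).det := by
      simp only [hG']
      rw [Matrix.inv_def, Ring.inverse_eq_inv, Matrix.smul_mul, Matrix.trace_smul, smul_eq_mul]
      rw [div_eq_mul_inv, mul_comm]
    rw [heq]
    exact hlog
  -- bound on the derivative
  have hbound : ∀ t ∈ Set.Icc (0:ℝ) 1, |G' t| ≤ K := by
    intro t ht
    set ψ := φ' + t • v with hψ
    have hψU : ψ ∈ U := hγmem t ht
    -- decompose D t as a combination of partial derivatives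
    have hDdecomp : D t = ∑ j, v j • partialDeriv C j ψ := by
      ext i k
      have hvsum : v = ∑ j, v j • (Pi.single j 1 : Fin l → ℝ) := by
        funext r
        simp [Pi.single_apply, Finset.sum_apply]
      simp only [hD, Matrix.of_apply]
      calc (fderiv ℝ (fun ψ => C ψ i k) ψ) v
          = (fderiv ℝ (fun ψ => C ψ i k) ψ) (∑ j, v j • (Pi.single j 1 : Fin l → ℝ)) := by
            rw [← hvsum]
        _ = ∑ j, v j • (fderiv ℝ (fun ψ => C ψ i k) ψ) (Pi.single j 1) := by
            rw [map_sum]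
            exact Finset.sum_congr rfl fun j _ => by rw [_root_.map_smul]
        _ = (∑ j, v j • partialDeriv C j ψ) i k := by
            simp only [Matrix.sum_apply, Matrix.smul_apply, partialDeriv, Matrix.of_apply,
              smul_eq_mul]
    have htrace : G' t = ∑ j, v j * ((C ψ)⁻¹ * partialDeriv C j ψ).trace := by
      simp only [hG']
      rw [hDdecomp, Matrix.mul_sum, Matrix.trace_sum]
      exact Finset.sum_congr rfl fun j _ => by rw [Matrix.mul_smul, Matrix.trace_smul, smul_eq_mul]
    have hjbound : ∀ j, |((C ψ)⁻¹ * partialDeriv C j ψ).trace| ≤ (Real.sqrt n / lmin) * M := by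
      intro j
      calc |((C ψ)⁻¹ * partialDeriv C j ψ).trace|
          ≤ frobNorm (C ψ)⁻¹ * frobNorm (partialDeriv C j ψ) := abs_trace_mul_le _ _
        _ ≤ (Real.sqrt n / lmin) * M := by
            apply mul_le_mul (frob_inv_bound _ lmin hl (hsymm _ hψU) (hpsd _ hψU))
              (hM _ hψU j) (frobNorm_nonneg _) (by positivity)
    have hsumabs : ∑ j, |v j| ≤ Real.sqrt l * vnorm (φ - φ') := by
      have hcs := cs_abs (fun _ : Fin l => (1:ℝ)) (fun j => |v j|)
      rw [vnorm, ← hv]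
      calc ∑ j, |v j| = abs (∑ j, (1:ℝ) * |v j|) := by
            rw [abs_of_nonneg (Finset.sum_nonneg fun j _ => by positivity)]
            simp
        _ ≤ Real.sqrt (∑ _j : Fin l, (1:ℝ) ^ 2) * Real.sqrt (∑ j, |v j| ^ 2) := hcs
        _ = Real.sqrt l * Real.sqrt (∑ j, (v j) ^ 2) := by
            congr 2
            · simp
            · exact Finset.sum_congr rfl fun j _ => sq_abs _
    calc |G' t| = |∑ j, v j * ((C ψ)⁻¹ * partialDeriv C j ψ).trace| := by rw [htrace]
      _ ≤ ∑ j, |v j * ((C ψ)⁻¹ * partialDeriv C j ψ).trace| := Finset.abs_sum_le_sum_abs _ _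
      _ ≤ ∑ j, |v j| * ((Real.sqrt n / lmin) * M) := by
          apply Finset.sum_le_sum
          intro j _
          rw [abs_mul]
          exact mul_le_mul_of_nonneg_left (hjbound j) (abs_nonneg _)
      _ = ((Real.sqrt n / lmin) * M) * ∑ j, |v j| := by rw [← Finset.sum_mul]; ring
      _ ≤ ((Real.sqrt n / lmin) * M) * (Real.sqrt l * vnorm (φ - φ')) := by
          apply mul_le_mul_of_nonneg_left hsumabs (by positivity)
      _ = K := by rw [hK]; ring
  -- mean value inequality
  have hmvt := norm_image_sub_le_of_norm_deriv_le_segment_01'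
    (f := G) (f' := G') (C := K)
    (fun t ht => (hGderiv t ht).hasDerivWithinAt)
    (fun t ht => by rw [Real.norm_eq_abs]; exact hbound t (Set.Ico_subset_Icc_self ht))
  have hG1 : G 1 = Real.log ((C φ).det) := by
    rw [hG]
    norm_num [hv]
  have hG0 : G 0 = Real.log ((C φ').det) := by
    rw [hG]
    norm_num
  rw [← hG1, ← hG0]
  rw [Real.norm_eq_abs] at hmvt
  exact hmvt
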